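/- Let u : ℝ² → ℝᵐ be a C² solution of the characteristic system ∂²u/∂s∂t = F(∂u/∂s, ∂u/∂t, u, s, t), where F is Lipschitz in its first three arguments and satisfies F(0, 0, c, s, t) = 0 for every constant vector c. If u is constant (equal to c₀) on the two characteristic lines {s = 0} and {t = 0} within the quadrant s, t ≥ 0, then u ≡ c₀ on the whole quadrant {s ≥ 0, t ≥ 0}. -/

import Mathlib

open Set Real

theorem stmt_11 (m : ℕ) (E : Type*) [NormedAddCommGroup E] [NormedSpace ℝ E]
    (F : E → E → E → ℝ → ℝ → E) (c₀ : E)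
    (hFcont : Continuous fun q : E × E × E × ℝ × ℝ => F q.1 q.2.1 q.2.2.1 q.2.2.2.1 q.2.2.2.2)
    (L : NNReal)
    (hFlip : ∀ s t : ℝ, LipschitzWith L fun q : E × E × E => F q.1 q.2.1 q.2.2 s t)
    (hF0 : ∀ (c : E) (s t : ℝ), F 0 0 c s t = 0)
    (u : ℝ × ℝ → E) (hu : ContDiff ℝ 2 u)
    (heq : ∀ p : ℝ × ℝ, 0 ≤ p.1 → 0 ≤ p.2 →
      fderiv ℝ (fun q => fderiv ℝ u q (0, 1)) p (1, 0) =
        F (fderiv ℝ u p (1, 0)) (fderiv ℝ u p (0, 1)) (u p) p.1 p.2)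
    (hbdry1 : ∀ s : ℝ, 0 ≤ s → u (s, 0) = c₀)
    (hbdry2 : ∀ t : ℝ, 0 ≤ t → u (0, t) = c₀) :
    ∀ p : ℝ × ℝ, 0 ≤ p.1 → 0 ≤ p.2 → u p = c₀ := by
  have hu1 : Differentiable ℝ u := hu.differentiable (by norm_num)
  have hd : ContDiff ℝ 1 (fderiv ℝ u) := hu.fderiv_right (by norm_num)
  set v : ℝ × ℝ → E := fun p => fderiv ℝ u p (0, 1) with hv_def
  set w : ℝ × ℝ → E := fun p => fderiv ℝ u p (1, 0) with hw_def
  have hv : ContDiff ℝ 1 v := hd.clm_apply contDiff_const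
  have hw : ContDiff ℝ 1 w := hd.clm_apply contDiff_const
  -- the PDE, rephrased
  have heq' : ∀ p : ℝ × ℝ, 0 ≤ p.1 → 0 ≤ p.2 →
      fderiv ℝ v p (1, 0) = F (w p) (v p) (u p) p.1 p.2 := by
    intro p h1 h2
    exact heq p h1 h2
  -- symmetry of second derivatives
  have hsymm : ∀ p : ℝ × ℝ, fderiv ℝ w p (0, 1) = fderiv ℝ v p (1, 0) := by
    intro p
    have h1 : ∀ (a b : ℝ × ℝ),
        fderiv ℝ (fun q => fderiv ℝ u q a) p b = fderiv ℝ (fderiv ℝ u) p b a := by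
      intro a b
      have := fderiv_clm_apply (𝕜 := ℝ) ((hd.differentiable (by norm_num)) p) (differentiableAt_const a)
      rw [this]
      simp
    rw [hv_def, hw_def, h1, h1]
    exact (hu.contDiffAt.isSymmSndFDerivAt (by simp [minSmoothness_of_isRCLikeNormedField])) _ _
  -- derivatives along horizontal / vertical lines
  have hA : ∀ (σ t : ℝ), HasDerivAt (fun x => v (x, t)) (fderiv ℝ v (σ, t) (1, 0)) σ := by
    intro σ t
    exact ((hv.differentiable (by norm_num) (σ, t)).hasFDerivAt).comp_hasDerivAt σ
      (HasDerivAt.prodMk (hasDerivAt_id σ) (hasDerivAt_const σ t))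
  have hB : ∀ (s τ : ℝ), HasDerivAt (fun y => w (s, y)) (fderiv ℝ v (s, τ) (1, 0)) τ := by
    intro s τ
    have h := ((hw.differentiable (by norm_num) (s, τ)).hasFDerivAt).comp_hasDerivAt τ
      (HasDerivAt.prodMk (hasDerivAt_const τ s) (hasDerivAt_id τ))
    rwa [hsymm] at h
  have hC : ∀ (s τ : ℝ), HasDerivAt (fun y => u (s, y)) (v (s, τ)) τ := by
    intro s τ
    exact ((hu1 (s, τ)).hasFDerivAt).comp_hasDerivAt τ
      (HasDerivAt.prodMk (hasDerivAt_const τ s) (hasDerivAt_id τ))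
  -- boundary values of the derivatives
  have hv0 : ∀ t : ℝ, 0 ≤ t → v (0, t) = 0 := by
    intro t ht
    have hD : HasDerivAt (fun τ => u (0, τ)) (v (0, t)) t :=
      ((hu1 (0, t)).hasFDerivAt).comp_hasDerivAt t
        (HasDerivAt.prodMk (hasDerivAt_const t (0 : ℝ)) (hasDerivAt_id t))
    have h2 : HasDerivWithinAt (fun τ => u (0, τ)) 0 (Ici 0) t :=
      (hasDerivWithinAt_const t (Ici 0) c₀).congr (fun τ hτ => hbdry2 τ hτ) (hbdry2 t ht)
    have h1 := (hD.hasDerivWithinAt (s := Ici 0)).derivWithin (uniqueDiffOn_Ici 0 t ht)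
    rw [h2.derivWithin (uniqueDiffOn_Ici 0 t ht)] at h1
    exact h1.symm
  have hw0 : ∀ s : ℝ, 0 ≤ s → w (s, 0) = 0 := by
    intro s hs
    have hD : HasDerivAt (fun σ => u (σ, 0)) (w (s, 0)) s :=
      ((hu1 (s, 0)).hasFDerivAt).comp_hasDerivAt s
        (HasDerivAt.prodMk (hasDerivAt_id s) (hasDerivAt_const s (0 : ℝ)))
    have h2 : HasDerivWithinAt (fun σ => u (σ, 0)) 0 (Ici 0) s :=
      (hasDerivWithinAt_const s (Ici 0) c₀).congr (fun σ hσ => hbdry1 σ hσ) (hbdry1 s hs)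
    have h1 := (hD.hasDerivWithinAt (s := Ici 0)).derivWithin (uniqueDiffOn_Ici 0 s hs)
    rw [h2.derivWithin (uniqueDiffOn_Ici 0 s hs)] at h1
    exact h1.symm
  -- Lipschitz bound on F
  have hFb : ∀ (a b c : E) (s t : ℝ), ‖F a b c s t‖ ≤ (L : ℝ) * (‖a‖ + ‖b‖) := by
    intro a b c s t
    have h := (hFlip s t).dist_le_mul (a, b, c) (0, 0, c)
    simp only [hF0, dist_eq_norm, sub_zero] at h
    refine h.trans ?_
    have h2 : ‖((a, b, c) : E × E × E) - (0, 0, c)‖ ≤ ‖a‖ + ‖b‖ := by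
      have he : ((a, b, c) : E × E × E) - (0, 0, c) = (a, b, 0) := by simp [Prod.ext_iff]
      rw [he]
      simp only [Prod.norm_def, norm_zero]
      exact max_le (le_add_of_nonneg_right (norm_nonneg _))
        (max_le (le_add_of_nonneg_left (norm_nonneg _)) (by positivity))
    exact mul_le_mul_of_nonneg_left h2 L.coe_nonneg
  -- main argument on the rectangle [0,S] × [0,T]
  intro p hp1 hp2
  obtain ⟨S, T⟩ := p
  simp only at hp1 hp2
  set K : ℝ := 4 * (L : ℝ) + 3 with hK_def
  have hK : 0 < K := by positivity
  set R : Set (ℝ × ℝ) := Icc (0 : ℝ) S ×ˢ Icc (0 : ℝ) T with hR_def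
  have hRc : IsCompact R := isCompact_Icc.prod isCompact_Icc
  have hR0 : ((0 : ℝ), (0 : ℝ)) ∈ R := ⟨⟨le_rfl, hp1⟩, ⟨le_rfl, hp2⟩⟩
  set G : ℝ × ℝ → ℝ :=
    fun q => Real.exp (-(K * (q.1 + q.2))) * (‖w q‖ + ‖v q‖ + ‖u q - c₀‖) with hG_def
  have hGc : Continuous G := by
    apply Continuous.mul
    · exact ((continuous_const.mul (continuous_fst.add continuous_snd)).neg).rexp
    · exact ((hw.continuous.norm.add hv.continuous.norm).add
        ((hu.continuous.sub continuous_const).norm))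
  obtain ⟨p₀, hp₀, hmax⟩ := hRc.exists_isMaxOn ⟨((0:ℝ), (0:ℝ)), hR0⟩ hGc.continuousOn
  set M : ℝ := G p₀ with hM_def
  have hMnn : 0 ≤ M := by
    refine le_trans ?_ (hmax hR0)
    rw [hG_def]
    positivity
  -- the maximum controls everything
  have hsum_le : ∀ q ∈ R, ‖w q‖ + ‖v q‖ + ‖u q - c₀‖ ≤ M * Real.exp (K * (q.1 + q.2)) := by
    intro q hq
    have h : G q ≤ M := hmax hq
    have he : (0 : ℝ) < Real.exp (K * (q.1 + q.2)) := Real.exp_pos _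
    calc ‖w q‖ + ‖v q‖ + ‖u q - c₀‖
        = Real.exp (K * (q.1 + q.2)) * G q := by
          rw [hG_def]
          simp only
          rw [← mul_assoc, ← Real.exp_add]
          simp
      _ ≤ Real.exp (K * (q.1 + q.2)) * M := mul_le_mul_of_nonneg_left h he.le
      _ = M * Real.exp (K * (q.1 + q.2)) := mul_comm _ _
  have hDb : ∀ q : ℝ × ℝ, q ∈ R →
      ‖fderiv ℝ v q (1, 0)‖ ≤ (L : ℝ) * M * Real.exp (K * (q.1 + q.2)) := by
    intro q hq
    rw [heq' q hq.1.1 hq.2.1]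
    refine (hFb _ _ _ _ _).trans ?_
    have h1 : ‖w q‖ + ‖v q‖ ≤ M * Real.exp (K * (q.1 + q.2)) := by
      have h2 := hsum_le q hq
      have h3 := norm_nonneg (u q - c₀)
      linarith
    calc (L : ℝ) * (‖w q‖ + ‖v q‖) ≤ (L : ℝ) * (M * Real.exp (K * (q.1 + q.2))) :=
          mul_le_mul_of_nonneg_left h1 L.coe_nonneg
      _ = (L : ℝ) * M * Real.exp (K * (q.1 + q.2)) := by ring
  -- derivative of the exponential barrier
  have hBd : ∀ (c y x : ℝ), HasDerivAt (fun σ => c * Real.exp (K * (σ + y)) / K)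
      (c * Real.exp (K * (x + y))) x := by
    intro c y x
    have h1 : HasDerivAt (fun σ : ℝ => K * (σ + y)) K x := by
      simpa using ((hasDerivAt_id x).add_const y).const_mul K
    have h2 := (h1.exp.const_mul c).div_const K
    rw [mul_div_assoc, mul_div_cancel_right₀ _ hK.ne'] at h2
    exact h2
  -- estimate for v
  have est_v : ∀ q : ℝ × ℝ, q ∈ R →
      ‖v q‖ ≤ (L : ℝ) * M * Real.exp (K * (q.1 + q.2)) / K := by
    rintro ⟨s, t⟩ hq
    obtain ⟨⟨hs0, hsS⟩, ht0, htT⟩ := hq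
    have hcont : ContinuousOn (fun σ : ℝ => v (σ, t)) (Icc 0 s) :=
      (hv.continuous.comp (continuous_id.prodMk continuous_const)).continuousOn
    have := image_norm_le_of_norm_deriv_right_le_deriv_boundary hcont
      (fun σ _ => (hA σ t).hasDerivWithinAt)
      (B := fun σ => (L : ℝ) * M * Real.exp (K * (σ + t)) / K)
      (B' := fun σ => (L : ℝ) * M * Real.exp (K * (σ + t)))
      (by rw [hv0 t ht0]; rw [norm_zero]; positivity)
      (fun x => hBd ((L : ℝ) * M) t x)
      (fun σ hσ => hDb (σ, t) ⟨⟨hσ.1, hσ.2.le.trans hsS⟩, ht0, htT⟩)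
    exact this ⟨hs0, le_rfl⟩
  -- estimate for w
  have est_w : ∀ q : ℝ × ℝ, q ∈ R →
      ‖w q‖ ≤ (L : ℝ) * M * Real.exp (K * (q.1 + q.2)) / K := by
    rintro ⟨s, t⟩ hq
    obtain ⟨⟨hs0, hsS⟩, ht0, htT⟩ := hq
    have hcont : ContinuousOn (fun τ : ℝ => w (s, τ)) (Icc 0 t) :=
      (hw.continuous.comp (continuous_const.prodMk continuous_id)).continuousOn
    have h := image_norm_le_of_norm_deriv_right_le_deriv_boundary hcont
      (fun τ _ => (hB s τ).hasDerivWithinAt)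
      (B := fun τ => (L : ℝ) * M * Real.exp (K * (τ + s)) / K)
      (B' := fun τ => (L : ℝ) * M * Real.exp (K * (τ + s)))
      (by rw [hw0 s hs0]; rw [norm_zero]; positivity)
      (fun x => hBd ((L : ℝ) * M) s x)
      (fun τ hτ => by
        have h2 := hDb (s, τ) ⟨⟨hs0, hsS⟩, hτ.1, hτ.2.le.trans htT⟩
        simpa [add_comm] using h2)
    have h3 := h ⟨ht0, le_rfl⟩
    simpa [add_comm] using h3
  -- estimate for u
  have est_u : ∀ q : ℝ × ℝ, q ∈ R →
      ‖u q - c₀‖ ≤ M * Real.exp (K * (q.1 + q.2)) / K := by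
    rintro ⟨s, t⟩ hq
    obtain ⟨⟨hs0, hsS⟩, ht0, htT⟩ := hq
    have hcont : ContinuousOn (fun τ : ℝ => u (s, τ) - c₀) (Icc 0 t) :=
      ((hu.continuous.comp (continuous_const.prodMk continuous_id)).sub
        continuous_const).continuousOn
    have h := image_norm_le_of_norm_deriv_right_le_deriv_boundary hcont
      (fun τ _ => ((hC s τ).sub_const c₀).hasDerivWithinAt)
      (B := fun τ => M * Real.exp (K * (τ + s)) / K)
      (B' := fun τ => M * Real.exp (K * (τ + s)))
      (by rw [hbdry1 s hs0]; rw [sub_self, norm_zero]; positivity)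
      (fun x => hBd M s x)
      (fun τ hτ => by
        have h1 := hsum_le (s, τ) ⟨⟨hs0, hsS⟩, hτ.1, hτ.2.le.trans htT⟩
        have h2 := norm_nonneg (w (s, τ))
        have h3 := norm_nonneg (u (s, τ) - c₀)
        simp only at h1 ⊢
        rw [add_comm τ s]
        linarith)
    have h3 := h ⟨ht0, le_rfl⟩
    simpa [add_comm] using h3
  -- combine: M ≤ (2L+1) M / K, hence M ≤ 0
  have hM0 : M ≤ 0 := by
    have h1 := est_v p₀ hp₀
    have h2 := est_w p₀ hp₀
    have h3 := est_u p₀ hp₀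
    have hexp : Real.exp (-(K * (p₀.1 + p₀.2))) * Real.exp (K * (p₀.1 + p₀.2)) = 1 := by
      rw [← Real.exp_add]; simp
    have hM : M = Real.exp (-(K * (p₀.1 + p₀.2))) * (‖w p₀‖ + ‖v p₀‖ + ‖u p₀ - c₀‖) := by
      rw [hM_def, hG_def]
    have hen : 0 ≤ Real.exp (-(K * (p₀.1 + p₀.2))) := (Real.exp_pos _).le
    have h4 : M ≤ Real.exp (-(K * (p₀.1 + p₀.2))) *
        ((2 * (L : ℝ) + 1) * M * Real.exp (K * (p₀.1 + p₀.2)) / K) := by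
      rw [hM]
      refine mul_le_mul_of_nonneg_left ?_ hen
      have he : (L : ℝ) * M * Real.exp (K * (p₀.1 + p₀.2)) / K +
          (L : ℝ) * M * Real.exp (K * (p₀.1 + p₀.2)) / K +
          M * Real.exp (K * (p₀.1 + p₀.2)) / K =
          (2 * (L : ℝ) + 1) * M * Real.exp (K * (p₀.1 + p₀.2)) / K := by ring
      linarith
    have h5 : Real.exp (-(K * (p₀.1 + p₀.2))) *
        ((2 * (L : ℝ) + 1) * M * Real.exp (K * (p₀.1 + p₀.2)) / K) =
        (2 * (L : ℝ) + 1) * M / K := by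
      rw [Real.exp_neg]
      field_simp
    rw [h5] at h4
    rw [le_div_iff₀ hK] at h4
    rw [hK_def] at h4
    nlinarith [mul_nonneg hMnn L.coe_nonneg]
  -- conclude
  have hST : ((S, T) : ℝ × ℝ) ∈ R := ⟨⟨hp1, le_rfl⟩, ⟨hp2, le_rfl⟩⟩
  have h6 := hsum_le (S, T) hST
  have h7 : M * Real.exp (K * (S + T)) ≤ 0 :=
    mul_nonpos_of_nonpos_of_nonneg hM0 (Real.exp_pos _).le
  have h8 : ‖u (S, T) - c₀‖ ≤ 0 := by
    have h9 := norm_nonneg (w (S, T))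
    have h10 := norm_nonneg (v (S, T))
    simp only at h6
    linarith
  rw [← sub_eq_zero]
  exact norm_le_zero_iff.mp h8
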